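/- Let q be an acyclic natural join query with connected join graph G_q, where each edge {R,S} of G_q is weighted by w(R,S) = |attr(R) ∩ attr(S)|. Then every join tree of q is a maximum spanning tree of the weighted graph G_q. -/

import Mathlib

namespace JoinQuery

universe u

variable {ι : Type} {α : Type}

/-- A *tuple* over a finite set `X` of attributes, with values in the domain `D`:
a function assigning a domain value to each attribute of `X`. -/
def Tuple (D : Type u) {α : Type} (X : Finset α) : Type u := {a // a ∈ X} → D

/-- Projection: the restriction of a tuple over `X` to a subset `Y ⊆ X` of the attributes. -/
def restrict {D : Type u} {X Y : Finset α} (h : Y ⊆ X) (t : Tuple D X) : Tuple D Y :=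
  fun a => t ⟨a.1, h a.2⟩

/-- A database instance for the natural join query whose relation symbols are the elements
of `ι` with attribute sets given by `attr`: a finite set of tuples for every relation. -/
structure Inst (attr : ι → Finset α) (D : Type u) where
  rel : ∀ R : ι, Set (Tuple D (attr R))
  finite : ∀ R : ι, (rel R).Finite

/-- The set of attributes of the (sub)query given by the set `S` of relations. -/
def attrsOf [DecidableEq α] (attr : ι → Finset α) (S : Finset ι) : Finset α :=
  S.biUnion attr

theorem attr_subset_attrsOf [DecidableEq α] (attr : ι → Finset α) {S : Finset ι} {R : ι}
    (hR : R ∈ S) : attr R ⊆ attrsOf attr S :=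
  Finset.subset_biUnion_of_mem attr hR

theorem attrsOf_mono [DecidableEq α] (attr : ι → Finset α) {S₁ S₂ : Finset ι} (h : S₁ ⊆ S₂) :
    attrsOf attr S₁ ⊆ attrsOf attr S₂ :=
  Finset.biUnion_subset_biUnion_of_subset_left attr h

/-- The output of the natural join of the relations in `S`, on the instance `I`:
all tuples over the attributes of `S` whose restriction to each relation `R ∈ S`
belongs to `I.rel R`. -/
def output [DecidableEq α] {D : Type u} (attr : ι → Finset α) (I : Inst attr D)
    (S : Finset ι) : Set (Tuple D (attrsOf attr S)) :=
  {t | ∀ (R : ι) (hR : R ∈ S), restrict (attr_subset_attrsOf attr hR) t ∈ I.rel R}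

/-- The output `q(I)` of the full query (the natural join of all relations). -/
def fullOutput [Fintype ι] [DecidableEq α] {D : Type u} (attr : ι → Finset α)
    (I : Inst attr D) : Set (Tuple D (attrsOf attr Finset.univ)) :=
  output attr I Finset.univ

/-- An instance is *fully reduced* if every relation equals the projection of the
full output onto its attributes. -/
def FullyReduced [Fintype ι] [DecidableEq α] {D : Type u} (attr : ι → Finset α)
    (I : Inst attr D) : Prop :=
  ∀ R : ι,
    I.rel R = restrict (attr_subset_attrsOf attr (Finset.mem_univ R)) '' fullOutput attr I

/-- The subjoin given by the set `S` of relations is *safe*: on every fully reduced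
instance, its output is the projection of the full output onto its attributes. -/
def Safe [Fintype ι] [DecidableEq α] (attr : ι → Finset α) (S : Finset ι) : Prop :=
  ∀ (D : Type u) (I : Inst attr D), FullyReduced attr I →
    output attr I S =
      restrict (attrsOf_mono attr (Finset.subset_univ S)) '' fullOutput attr I

/-- The *join graph* of the query: vertices are the relations, two distinct relations
being adjacent iff they share an attribute. -/
def joinGraph [DecidableEq α] (attr : ι → Finset α) : SimpleGraph ι where
  Adj R S := R ≠ S ∧ (attr R ∩ attr S).Nonempty
  symm := by
    refine ⟨fun R S h => ?_⟩
    exact ⟨h.1.symm, by rw [Finset.inter_comm]; exact h.2⟩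
  loopless := by refine ⟨fun R h => ?_⟩; exact h.1 rfl

/-- `T` is a spanning tree of the graph `G` (a tree on the same vertex set all of whose
edges are edges of `G`). -/
def IsSpanningTree (G T : SimpleGraph ι) : Prop :=
  T ≤ G ∧ T.IsTree

/-- `T` is a *join tree* of the query: a spanning tree of the join graph such that, for
every attribute `A` (occurring in the query), the relations containing `A` induce a
connected subgraph of `T`. -/
def IsJoinTree [DecidableEq α] (attr : ι → Finset α) (T : SimpleGraph ι) : Prop :=
  IsSpanningTree (joinGraph attr) T ∧
    ∀ A : α, (∃ R : ι, A ∈ attr R) → (T.induce {R : ι | A ∈ attr R}).Connected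

/-- The query is (α-)acyclic iff it has a join tree. -/
def Acyclic [DecidableEq α] (attr : ι → Finset α) : Prop :=
  ∃ T : SimpleGraph ι, IsJoinTree attr T

/-- The weight of an edge `{R, S}`: the number of shared attributes `|attr R ∩ attr S|`. -/
def edgeWeight [DecidableEq α] (attr : ι → Finset α) : Sym2 ι → ℕ :=
  Sym2.lift ⟨fun R S => (attr R ∩ attr S).card, fun R S => by simp [Finset.inter_comm]⟩

/-- The total weight of (the edges of) a graph `T`. -/
noncomputable def weight [DecidableEq α] (attr : ι → Finset α) (T : SimpleGraph ι) : ℕ :=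
  ∑ᶠ e ∈ T.edgeSet, edgeWeight attr e

/-- `T` is a maximum spanning tree of the weighted join graph. -/
def IsMaxSpanningTree [DecidableEq α] (attr : ι → Finset α) (T : SimpleGraph ι) : Prop :=
  IsSpanningTree (joinGraph attr) T ∧
    ∀ T' : SimpleGraph ι, IsSpanningTree (joinGraph attr) T' →
      weight attr T' ≤ weight attr T

/-- γ-acyclicity: α-acyclicity together with the absence of a γ-cycle of size 3,
i.e. of three distinct relations `R, S, T` and three distinct attributes `x, y, z`
with `x, y ∈ attr R`, `y, z ∈ attr S` and `x, y, z ∈ attr T`. -/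
def GammaAcyclic [DecidableEq α] (attr : ι → Finset α) : Prop :=
  Acyclic attr ∧
    ¬ ∃ (R S T : ι) (x y z : α),
        R ≠ S ∧ R ≠ T ∧ S ≠ T ∧ x ≠ y ∧ x ≠ z ∧ y ≠ z ∧
        x ∈ attr R ∧ y ∈ attr R ∧ y ∈ attr S ∧ z ∈ attr S ∧
        x ∈ attr T ∧ y ∈ attr T ∧ z ∈ attr T

/-- A *connected subjoin*: a nonempty set of relations inducing a connected subgraph
of the join graph. -/
def ConnectedSubjoin [DecidableEq α] (attr : ι → Finset α) (S : Finset ι) : Prop :=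
  S.Nonempty ∧ ((joinGraph attr).induce (S : Set ι)).Connected

/-- The number of edges of `T` whose both endpoints contain the attribute `A`. -/
noncomputable def eCount (attr : ι → Finset α) (T : SimpleGraph ι) (A : α) : ℕ :=
  {e ∈ T.edgeSet | ∀ R ∈ e, A ∈ attr R}.ncard

/-- The number of relations whose attribute set contains `A`. -/
noncomputable def nCount (attr : ι → Finset α) (A : α) : ℕ :=
  {R : ι | A ∈ attr R}.ncard

/-- A (binary) join expression over the relation symbols `ι`. -/
inductive JoinExpr (ι : Type) : Type where
  | leaf : ι → JoinExpr ι
  | node : JoinExpr ι → JoinExpr ι → JoinExpr ι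

namespace JoinExpr

/-- The list of leaves of a join expression. -/
def leaves {ι : Type} : JoinExpr ι → List ι
  | leaf R => [R]
  | node l r => l.leaves ++ r.leaves

/-- The set of relations appearing in a join expression. -/
def rels {ι : Type} [DecidableEq ι] : JoinExpr ι → Finset ι
  | leaf R => {R}
  | node l r => l.rels ∪ r.rels

/-- The leaves of the expression are exactly the relations of the query,
each occurring once. -/
def Complete {ι : Type} (θ : JoinExpr ι) : Prop :=
  θ.leaves.Nodup ∧ ∀ R : ι, R ∈ θ.leaves

/-- The expression has no Cartesian products: at every internal node, the relations of the
two subtrees are joined by at least one edge of `G`. -/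
def ConnectedExpr {ι : Type} [DecidableEq ι] (G : SimpleGraph ι) : JoinExpr ι → Prop
  | leaf _ => True
  | node l r =>
      (∃ R ∈ l.rels, ∃ S ∈ r.rels, G.Adj R S) ∧ ConnectedExpr G l ∧ ConnectedExpr G r

/-- The expression is *monotone* on the instance `I`: at every internal node
`θ' = θ'₁ ⋈ θ'₂`, the output of each child equals the projection of the output of the
node onto the child's attributes (no tuple of either input is removed by the join). -/
def MonotoneOn {ι α : Type} [DecidableEq ι] [DecidableEq α] {D : Type u}
    (attr : ι → Finset α) (I : Inst attr D) : JoinExpr ι → Prop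
  | leaf _ => True
  | node l r =>
      output attr I l.rels =
        restrict (attrsOf_mono attr Finset.subset_union_left) ''
          output attr I (l.rels ∪ r.rels) ∧
      output attr I r.rels =
        restrict (attrsOf_mono attr Finset.subset_union_right) ''
          output attr I (l.rels ∪ r.rels) ∧
      MonotoneOn attr I l ∧ MonotoneOn attr I r

end JoinExpr

/-- Two tuples (over possibly different attribute sets) *agree* on their common attributes. -/
def AgreeOn {α : Type} {D : Type u} {X Y : Finset α} (t : Tuple D X) (s : Tuple D Y) : Prop :=
  ∀ (a : α) (ha : a ∈ X) (hb : a ∈ Y), t ⟨a, ha⟩ = s ⟨a, hb⟩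

/-- The semi-join `R ⋉ S` on the instance `I`: the tuples of `I.rel R` having a match
in `I.rel S` (a tuple agreeing with them on `attr R ∩ attr S`). -/
def semiJoin {D : Type u} (attr : ι → Finset α) (I : Inst attr D) (R S : ι) :
    Set (Tuple D (attr R)) :=
  {t ∈ I.rel R | ∃ s ∈ I.rel S, AgreeOn t s}

/-- The instance obtained from `I` by replacing the content of relation `R` with the
semi-join `R ⋉ S` (all other relations unchanged). -/
def Inst.semiJoinUpdate [DecidableEq ι] {attr : ι → Finset α} {D : Type u}
    (I : Inst attr D) (R S : ι) : Inst attr D where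
  rel := Function.update I.rel R (semiJoin attr I R S)
  finite := by
    intro R'
    rcases eq_or_ne R' R with rfl | h
    · rw [Function.update_self]
      exact (I.finite R').subset fun t ht => ht.1
    · rw [Function.update_of_ne h]
      exact I.finite R'

/-- The forward pass of the semi-join phase: process the vertices in the order given by
the list `L`; when processing a vertex `R`, successively replace its content by `R ⋉ S`
for each of its children `S` (listed by `childList R`). -/
def forwardPass [DecidableEq ι] {attr : ι → Finset α} {D : Type u}
    (I : Inst attr D) (L : List ι) (childList : ι → List ι) : Inst attr D :=
  L.foldl (fun J R => (childList R).foldl (fun K S => K.semiJoinUpdate R S) J) I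

/-- The backward pass of the semi-join phase: process the vertices in the order given by
the list `L`; when processing a non-root vertex `R`, replace its content by `R ⋉ par R`. -/
def backwardPass [DecidableEq ι] {attr : ι → Finset α} {D : Type u}
    (I : Inst attr D) (L : List ι) (r : ι) (par : ι → ι) : Inst attr D :=
  L.foldl (fun J R => if R = r then J else J.semiJoinUpdate R (par R)) I

end JoinQuery

namespace JoinQuery

universe v

section Aux

variable {ι : Type}

private lemma concat_isPath' {G : SimpleGraph ι} {u v w : ι} {p : G.Walk u v}
    (hp : p.IsPath) (h : G.Adj v w) (hw : w ∉ p.support) : (p.concat h).IsPath := by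
  rw [← SimpleGraph.Walk.isPath_reverse_iff, SimpleGraph.Walk.reverse_concat,
    SimpleGraph.Walk.cons_isPath_iff]
  refine ⟨hp.reverse, ?_⟩
  rw [SimpleGraph.Walk.support_reverse, List.mem_reverse]
  exact hw

private lemma isPath_of_concat_isPath' {G : SimpleGraph ι} {u v w : ι} {p : G.Walk u v}
    (h : G.Adj v w) (hp : (p.concat h).IsPath) : p.IsPath := by
  rw [← SimpleGraph.Walk.isPath_reverse_iff, SimpleGraph.Walk.reverse_concat,
    SimpleGraph.Walk.cons_isPath_iff] at hp
  exact (SimpleGraph.Walk.isPath_reverse_iff p).mp hp.1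

/-- In a tree with a chosen root `r`, there is a parent function and a depth function
with the expected properties. -/
private lemma exists_parent {G : SimpleGraph ι} (hG : G.IsTree) (r : ι) :
    ∃ (par : ι → ι) (len : ι → ℕ),
      (∀ v, v ≠ r → G.Adj (par v) v) ∧
      (∀ v, v ≠ r → len (par v) + 1 = len v) ∧
      (∀ v, v ≠ r → ∀ p : G.Walk r v, p.IsPath → par v ∈ p.support) ∧
      (∀ a b, G.Adj a b → (a = par b ∧ b ≠ r) ∨ (b = par a ∧ a ≠ r)) := by
  classical
  choose tp htp hun using fun v => hG.existsUnique_path r v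
  have htpr : tp r = SimpleGraph.Walk.nil :=
    (hun r SimpleGraph.Walk.nil SimpleGraph.Walk.IsPath.nil).symm
  set P : ι → ι → Prop := fun v u => ∃ h : G.Adj u v, tp v = (tp u).concat h with hPdef
  have hstep : ∀ a b (h : G.Adj b a), a ∉ (tp b).support → P a b := by
    intro a b h ha
    exact ⟨h, (hun a _ (concat_isPath' (htp b) h ha)).symm⟩
  have hex : ∀ v, v ≠ r → ∃ u, P v u := by
    intro v hv
    obtain ⟨w, h, q, hq⟩ := SimpleGraph.Walk.exists_eq_cons_of_ne hv.symm (tp v)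
    obtain ⟨x, q', h', hc⟩ := SimpleGraph.Walk.exists_cons_eq_concat h q
    have htpv : tp v = q'.concat h' := by rw [hq, hc]
    have hq'path : q'.IsPath := isPath_of_concat_isPath' h' (htpv ▸ htp v)
    exact ⟨x, h', by rw [htpv, hun x q' hq'path]⟩
  set par : ι → ι := fun v => if h : ∃ u, P v u then h.choose else v with hpardef
  have hspec : ∀ v, v ≠ r → P v (par v) := by
    intro v hv
    have h := hex v hv
    simp only [hpardef, dif_pos h]
    exact h.choose_spec
  have hPuniq : ∀ v u u', P v u → P v u' → u = u' := by
    rintro v u u' ⟨h1, e1⟩ ⟨h2, e2⟩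
    have hsupp : (tp u).support ++ [v] = (tp u').support ++ [v] := by
      have h3 := congrArg SimpleGraph.Walk.support (e1.symm.trans e2)
      simpa [List.concat_eq_append] using h3
    have hs : (tp u).support = (tp u').support := by
      exact List.append_cancel_right hsupp
    have g1 : (tp u).support.getLast? = some u := by
      rw [List.getLast?_eq_getLast_of_ne_nil ((tp u).support_ne_nil),
        SimpleGraph.Walk.getLast_support]
    have g2 : (tp u').support.getLast? = some u' := by
      rw [List.getLast?_eq_getLast_of_ne_nil ((tp u').support_ne_nil),
        SimpleGraph.Walk.getLast_support]
    rw [hs, g2] at g1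
    exact (Option.some_inj.mp g1).symm
  have hlen : ∀ v, v ≠ r → (tp (par v)).length + 1 = (tp v).length := by
    intro v hv
    obtain ⟨h, e⟩ := hspec v hv
    rw [e, SimpleGraph.Walk.length_concat]
  have hlenr : (tp r).length = 0 := by rw [htpr]; rfl
  have hedge0 : ∀ a b (hadj : G.Adj a b), (tp b).length ≤ (tp a).length →
      b = par a ∧ a ≠ r := by
    intro a b hadj hle
    have hnotmem : a ∉ (tp b).support := by
      intro hmem
      have h4 : ((tp b).takeUntil a hmem).length = (tp a).length :=
        congrArg SimpleGraph.Walk.length (hun a _ ((htp b).takeUntil hmem))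
      have h2 := congrArg SimpleGraph.Walk.length ((tp b).take_spec hmem)
      rw [SimpleGraph.Walk.length_append] at h2
      have h3 : ((tp b).dropUntil a hmem).length ≠ 0 := fun h0 =>
        hadj.ne (SimpleGraph.Walk.eq_of_length_eq_zero h0)
      omega
    have hPa : P a b := hstep a b hadj.symm hnotmem
    have har : a ≠ r := by
      rintro rfl
      obtain ⟨h', e⟩ := hPa
      have hl := congrArg SimpleGraph.Walk.length e
      rw [htpr] at hl
      simp at hl
    exact ⟨hPuniq a b (par a) hPa (hspec a har), har⟩
  refine ⟨par, fun v => (tp v).length, ?_, hlen, ?_, ?_⟩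
  · intro v hv
    obtain ⟨h, -⟩ := hspec v hv
    exact h
  · intro v hv p hp
    obtain ⟨h, e⟩ := hspec v hv
    rw [hun v p hp, e, SimpleGraph.Walk.support_concat]
    rw [List.mem_append]
    exact Or.inl ((tp (par v)).end_mem_support)
  · intro a b hadj
    rcases le_total (tp b).length (tp a).length with hle | hle
    · exact Or.inr (hedge0 a b hadj hle)
    · exact Or.inl (hedge0 b a hadj.symm hle)

private lemma count_le_of_isTree [Fintype ι] {G : SimpleGraph ι} (hG : G.IsTree)
    {s : Set ι} {r : ι} (hr : r ∈ s) :
    {e ∈ G.edgeSet | ∀ x ∈ e, x ∈ s}.ncard ≤ (s \ {r}).ncard := by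
  classical
  obtain ⟨par, len, hadj, hlen, hsup, hedge⟩ := exists_parent hG r
  have hexc : ∀ e ∈ {e ∈ G.edgeSet | ∀ x ∈ e, x ∈ s}, ∃ c, c ≠ r ∧ e = s(par c, c) := by
    intro e
    induction e using Sym2.ind with
    | _ a b =>
      intro he
      rcases hedge a b ((SimpleGraph.mem_edgeSet G).mp he.1) with ⟨h1, h2⟩ | ⟨h1, h2⟩
      · exact ⟨b, h2, by rw [← h1]⟩
      · refine ⟨a, h2, ?_⟩
        rw [← h1]
        exact Sym2.eq_swap
  set f : Sym2 ι → ι := fun e => if h : ∃ c, c ≠ r ∧ e = s(par c, c) then h.choose else r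
    with hfdef
  have hfspec : ∀ e ∈ {e ∈ G.edgeSet | ∀ x ∈ e, x ∈ s}, f e ≠ r ∧ e = s(par (f e), f e) := by
    intro e he
    have h := hexc e he
    simp only [hfdef, dif_pos h]
    exact h.choose_spec
  apply Set.ncard_le_ncard_of_injOn f
  · intro e he
    obtain ⟨h1, h2⟩ := hfspec e he
    have hmem : f e ∈ e := by
      have := Sym2.mem_mk_right (par (f e)) (f e)
      rwa [← h2] at this
    exact ⟨he.2 _ hmem, by simpa using h1⟩
  · intro e₁ h₁ e₂ h₂ hfe
    rw [(hfspec e₁ h₁).2, (hfspec e₂ h₂).2, hfe]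

private lemma le_count_of_connected [Fintype ι] {G : SimpleGraph ι} (hG : G.IsTree)
    {s : Set ι} {r : ι} (hr : r ∈ s) (hconn : (G.induce s).Connected) :
    (s \ {r}).ncard ≤ {e ∈ G.edgeSet | ∀ x ∈ e, x ∈ s}.ncard := by
  classical
  obtain ⟨par, len, hadj, hlen, hsup, hedge⟩ := exists_parent hG r
  apply Set.ncard_le_ncard_of_injOn (fun v => s(par v, v))
  · rintro v ⟨hv, hvr'⟩
    have hvr : v ≠ r := by simpa using hvr'
    have hadjv := hadj v hvr
    refine ⟨(SimpleGraph.mem_edgeSet G).mpr hadjv, ?_⟩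
    intro x hx
    rw [Sym2.mem_iff] at hx
    rcases hx with rfl | rfl
    · obtain ⟨q⟩ := hconn.preconnected ⟨v, hv⟩ ⟨r, hr⟩
      let q' := ((q.map (SimpleGraph.Embedding.induce s).toHom).reverse).bypass
      have hq'path : q'.IsPath := SimpleGraph.Walk.bypass_isPath _
      have hss : ∀ y ∈ q'.support, y ∈ s := by
        intro y hy
        have hy2 := SimpleGraph.Walk.support_bypass_subset _ hy
        rw [SimpleGraph.Walk.support_reverse, List.mem_reverse,
          SimpleGraph.Walk.support_map] at hy2
        obtain ⟨z, hz, rfl⟩ := List.mem_map.mp hy2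
        exact z.2
      exact hss _ (hsup v hvr q' hq'path)
    · exact hv
  · rintro v ⟨hv, hvr'⟩ w ⟨hw, hwr'⟩ hvw
    have hvr : v ≠ r := by simpa using hvr'
    have hwr : w ≠ r := by simpa using hwr'
    rcases Sym2.eq_iff.mp hvw with ⟨h1, h2⟩ | ⟨h1, h2⟩
    · exact h2
    · exfalso
      have l1 := hlen v hvr
      have l2 := hlen w hwr
      rw [h1] at l1
      rw [← h2] at l2
      omega

private lemma weight_eq_sum {ι α : Type} [Fintype ι] [DecidableEq α]
    (attr : ι → Finset α) (T : SimpleGraph ι) :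
    weight attr T = ∑ A ∈ attrsOf attr Finset.univ, eCount attr T A := by
  classical
  have hfin : T.edgeSet.Finite := Set.toFinite _
  rw [weight, ← hfin.coe_toFinset, finsum_mem_coe_finset]
  have h1 : ∀ e ∈ hfin.toFinset, edgeWeight attr e
      = ∑ A ∈ attrsOf attr Finset.univ, if (∀ x ∈ e, A ∈ attr x) then 1 else 0 := by
    intro e
    induction e using Sym2.ind with
    | _ a b =>
      intro _
      have he : edgeWeight attr s(a, b) = (attr a ∩ attr b).card := rfl
      rw [he, ← Finset.card_filter]
      congr 1
      ext A
      simp only [Finset.mem_inter, Finset.mem_filter, attrsOf, Finset.mem_biUnion, Sym2.mem_iff]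
      constructor
      · rintro ⟨ha, hb⟩
        exact ⟨⟨a, Finset.mem_univ a, ha⟩, by rintro x (rfl | rfl) <;> assumption⟩
      · rintro ⟨-, h⟩
        exact ⟨h a (Or.inl rfl), h b (Or.inr rfl)⟩
  rw [Finset.sum_congr rfl h1, Finset.sum_comm]
  refine Finset.sum_congr rfl fun A _ => ?_
  rw [← Finset.card_filter]
  have hset : {e ∈ T.edgeSet | ∀ x ∈ e, A ∈ attr x}
      = ↑(hfin.toFinset.filter fun e => ∀ x ∈ e, A ∈ attr x) := by
    ext e
    simp only [Set.mem_setOf_eq, Finset.coe_filter, Finset.mem_coe, Set.Finite.mem_toFinset,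
      SimpleGraph.mem_edgeSet]
  show (hfin.toFinset.filter fun e => ∀ x ∈ e, A ∈ attr x).card
      = {e ∈ T.edgeSet | ∀ x ∈ e, A ∈ attr x}.ncard
  rw [hset, Set.ncard_coe_finset]

end Aux

/- STATEMENT 0 -/
theorem joinTree_isMaxSpanningTree {ι α : Type} [Fintype ι] [DecidableEq α]
    (attr : ι → Finset α) (hattr : ∀ R : ι, (attr R).Nonempty)
    (hconn : (joinGraph attr).Connected)
    (hacyclic : Acyclic attr)
    (T : SimpleGraph ι) (hT : IsJoinTree attr T) :
    IsMaxSpanningTree attr T := by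
  classical
  obtain ⟨hTspan, hTind⟩ := hT
  refine ⟨hTspan, fun T' hT' => ?_⟩
  rw [weight_eq_sum attr T', weight_eq_sum attr T]
  refine Finset.sum_le_sum fun A hA => ?_
  obtain ⟨R0, -, hR0⟩ := Finset.mem_biUnion.mp hA
  have hr : R0 ∈ {R : ι | A ∈ attr R} := hR0
  calc eCount attr T' A ≤ ({R : ι | A ∈ attr R} \ {R0}).ncard :=
        count_le_of_isTree hT'.2 hr
    _ ≤ eCount attr T A := le_count_of_connected hTspan.2 hr (hTind A ⟨R0, hR0⟩)

end JoinQuery
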